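/- Let β_v ∈ (0,1) and ρ ∈ [0,ρ₀]. Let u = (u⁰,u¹,…,uᵐ,u^{m+1}) be a dual-feasible point such that for each i ∈ {1,…,m}, uⁱ = ζᵢāⁱ with ζᵢ ∈ [−1,1] for i ≤ m̄ and ζᵢ ∈ [0,1] for i > m̄, and |ζᵢ| ≤ β_v for all i. Then J⁰ − D(u,ρ) ≥ (1 − β_v) · J⁰. -/

import Mathlib

open scoped RealInnerProductSpace
open Finset

noncomputable section

/-- `ℝⁿ` with the Euclidean norm. -/
abbrev Evec (n : ℕ) : Type := EuclideanSpace ℝ (Fin n)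

variable {n m : ℕ}

/-- Apply a matrix to a Euclidean vector. -/
def matApply (M : Matrix (Fin n) (Fin n) ℝ) (x : Evec n) : Evec n := Matrix.toEuclideanLin M x

/-- ℓ2 operator norm of a matrix. -/
def opNorm (M : Matrix (Fin n) (Fin n) ℝ) : ℝ :=
  ‖(LinearMap.toContinuousLinearMap (Matrix.toEuclideanLin M))‖

/-- `H_ρ := ρ H_f + H_0`. -/
def Hmat (Hf H0 : Matrix (Fin n) (Fin n) ℝ) (ρ : ℝ) : Matrix (Fin n) (Fin n) ℝ := ρ • Hf + H0

/-- `l(d,0) = Σ_{i≤m̄} |⟨aⁱ,d⟩+bᵢ| + Σ_{i>m̄} max(⟨aⁱ,d⟩+bᵢ,0)` (indices `i.val < mbar` are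
the equality constraints). Note `lpen mbar a b 0 = J⁰`. -/
def lpen (mbar : ℕ) (a : Fin m → Evec n) (b : Fin m → ℝ) (d : Evec n) : ℝ :=
  ∑ i : Fin m, if (i : ℕ) < mbar then |⟪a i, d⟫ + b i| else max (⟪a i, d⟫ + b i) 0

/-- `J(d,ρ) = ρ⟨g,d⟩ + ½⟨d,H_ρ d⟩ + l(d,0)`. -/
def Jval (mbar : ℕ) (g : Evec n) (a : Fin m → Evec n) (b : Fin m → ℝ)
    (Hf H0 : Matrix (Fin n) (Fin n) ℝ) (ρ : ℝ) (d : Evec n) : ℝ :=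
  ρ * ⟪g, d⟫ + (1/2) * ⟪d, matApply (Hmat Hf H0 ρ) d⟫ + lpen mbar a b d

/-- `āⁱ := aⁱ/‖aⁱ‖`. -/
def abar (a : Fin m → Evec n) (i : Fin m) : Evec n := ‖a i‖⁻¹ • a i

/-- `b̄ᵢ := bᵢ/‖aⁱ‖`. -/
def bbar (a : Fin m → Evec n) (b : Fin m → ℝ) (i : Fin m) : ℝ := b i / ‖a i‖

/-- `Cᵢ`: hyperplane for equality constraints, half-space for inequality constraints. -/
def Cset (mbar : ℕ) (a : Fin m → Evec n) (b : Fin m → ℝ) (i : Fin m) : Set (Evec n) :=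
  if (i : ℕ) < mbar then {d | ⟪abar a i, d⟫ + bbar a b i = 0}
  else {d | ⟪abar a i, d⟫ + bbar a b i ≤ 0}

/-- Real-valued support function `δ*(y|C) = sup_{z∈C} ⟨y,z⟫` (via `sSup`). -/
def suppFn (y : Evec n) (C : Set (Evec n)) : ℝ := sSup ((fun z => ⟪y, z⟫) '' C)

/-- Dual feasibility: `u⁰ + Σᵢ ‖aⁱ‖ uⁱ + u^{m+1} = 0` and `‖uⁱ‖ ≤ 1` for `i = 1,…,m`. -/
def DualFeasible (a : Fin m → Evec n) (u0 : Evec n) (u : Fin m → Evec n) (um1 : Evec n) : Prop :=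
  (u0 + ∑ i, ‖a i‖ • u i + um1 = 0) ∧ ∀ i, ‖u i‖ ≤ 1

/-- Real-valued dual objective
`D(u,ρ) = -½⟨u⁰-ρg, H_ρ⁻¹(u⁰-ρg)⟩ - Σᵢ ‖aⁱ‖ δ*(uⁱ|Cᵢ) - δ*(u^{m+1}|X)`. -/
def Dval (mbar : ℕ) (g : Evec n) (a : Fin m → Evec n) (b : Fin m → ℝ)
    (Hf H0 : Matrix (Fin n) (Fin n) ℝ) (X : Set (Evec n)) (ρ : ℝ)
    (u0 : Evec n) (u : Fin m → Evec n) (um1 : Evec n) : ℝ :=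
  -(1/2) * ⟪u0 - ρ • g, matApply (Hmat Hf H0 ρ)⁻¹ (u0 - ρ • g)⟫
    - ∑ i, ‖a i‖ * suppFn (u i) (Cset mbar a b i)
    - suppFn um1 X

/-- Extended-real-valued support function. -/
def suppFnE (y : Evec n) (C : Set (Evec n)) : EReal :=
  ⨆ z ∈ C, ((⟪y, z⟫ : ℝ) : EReal)

/-- Extended-real-valued dual objective (value in `ℝ ∪ {±∞}`; it is `-∞` when a support
function is `+∞`). -/
def DvalE (mbar : ℕ) (g : Evec n) (a : Fin m → Evec n) (b : Fin m → ℝ)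
    (Hf H0 : Matrix (Fin n) (Fin n) ℝ) (X : Set (Evec n)) (ρ : ℝ)
    (u0 : Evec n) (u : Fin m → Evec n) (um1 : Evec n) : EReal :=
  ((-(1/2) * ⟪u0 - ρ • g, matApply (Hmat Hf H0 ρ)⁻¹ (u0 - ρ • g)⟫ : ℝ) : EReal)
    - ∑ i, (‖a i‖ : EReal) * suppFnE (u i) (Cset mbar a b i)
    - suppFnE um1 X


lemma quad_nonneg (M : Matrix (Fin n) (Fin n) ℝ) (hM : M.PosSemidef) (x : Evec n) :
    0 ≤ ⟪x, matApply M x⟫ := by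
  have h := hM.re_dotProduct_nonneg ((WithLp.equiv 2 (Fin n → ℝ)) x)
  simpa [matApply, Matrix.toEuclideanLin_apply, EuclideanSpace.inner_eq_star_dotProduct, dotProduct_comm] using h

lemma suppX (X : Set (Evec n)) (hXcp : IsCompact X) (hX0 : (0:Evec n) ∈ X)
    (y : Evec n) : (0:ℝ) ≤ suppFn y X := by
  have hbdd : BddAbove ((fun z => ⟪y, z⟫) '' X) :=
    (hXcp.image (continuous_const.inner continuous_id)).bddAbove
  exact le_csSup hbdd ⟨0, hX0, by simp⟩

lemma supp_eq (mbar : ℕ) (a : Fin m → Evec n) (ha : ∀ i, a i ≠ 0) (b : Fin m → ℝ)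
    (ζ : Fin m → ℝ) (i : Fin m) (hz : mbar ≤ (i:ℕ) → 0 ≤ ζ i) :
    suppFn (ζ i • abar a i) (Cset mbar a b i) = -(ζ i * bbar a b i) := by
  have hna : ‖abar a i‖ = 1 := by
    simp [abar, norm_smul, inv_mul_cancel₀ (norm_ne_zero_iff.2 (ha i))]
  have hself : ⟪abar a i, abar a i⟫ = 1 := by
    rw [real_inner_self_eq_norm_sq, hna]; norm_num
  set ab := abar a i
  set bb := bbar a b i
  have hd0 : ⟪ab, (-bb) • ab⟫ + bb = 0 := by
    rw [real_inner_smul_right, hself]; ring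
  have hmem : (-bb) • ab ∈ Cset mbar a b i := by
    unfold Cset
    split
    · exact hd0
    · exact le_of_eq hd0
  have hgreat : IsGreatest ((fun z => ⟪ζ i • ab, z⟫) '' Cset mbar a b i) (-(ζ i * bb)) := by
    constructor
    · refine ⟨(-bb) • ab, hmem, ?_⟩
      show ⟪ζ i • ab, (-bb) • ab⟫ = -(ζ i * bb)
      rw [real_inner_smul_left, real_inner_smul_right, hself]; ring
    · rintro x ⟨z, hzmem, rfl⟩
      show ⟪ζ i • ab, z⟫ ≤ -(ζ i * bb)
      rw [real_inner_smul_left]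
      unfold Cset at hzmem
      by_cases hlt : (i:ℕ) < mbar
      · rw [if_pos hlt] at hzmem
        have : ⟪ab, z⟫ = -bb := by linarith [Set.mem_setOf_eq ▸ hzmem]
        rw [this]; ring_nf; exact le_refl _
      · rw [if_neg hlt] at hzmem
        have hz' : 0 ≤ ζ i := hz (not_lt.mp hlt)
        have : ⟪ab, z⟫ ≤ -bb := by
          have := hzmem; simp only [Set.mem_setOf_eq] at this; linarith
        nlinarith
  exact hgreat.csSup_eq

/-- Let `β_v ∈ (0,1)` and `ρ ∈ [0,ρ₀]`.  Let `u` be a dual-feasible point such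
that for each `i`, `uⁱ = ζᵢāⁱ` with `ζᵢ ∈ [−1,1]` for equality indices, `ζᵢ ∈ [0,1]` for
inequality indices, and `|ζᵢ| ≤ β_v` for all `i`.  Then `J⁰ − D(u,ρ) ≥ (1 − β_v) · J⁰`. -/
theorem statement_13
    (n m mbar : ℕ) (hn : 1 ≤ n) (hmm : mbar ≤ m)
    (g : Evec n) (a : Fin m → Evec n) (ha : ∀ i, a i ≠ 0) (b : Fin m → ℝ)
    (Hf H0 : Matrix (Fin n) (Fin n) ℝ) (hHf : Hf.IsHermitian) (hH0 : H0.IsHermitian)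
    (ρ₀ : ℝ) (hρ₀ : 0 < ρ₀)
    (hpos : ∀ ρ ∈ Set.Icc (0:ℝ) ρ₀, (Hmat Hf H0 ρ).PosDef)
    (X : Set (Evec n)) (hXne : X.Nonempty) (hXcp : IsCompact X)
    (hXcv : Convex ℝ X) (hX0 : (0 : Evec n) ∈ X)
    (βv : ℝ) (hβv : βv ∈ Set.Ioo (0:ℝ) 1)
    (ρ : ℝ) (hρ : ρ ∈ Set.Icc (0:ℝ) ρ₀)
    (u0 : Evec n) (u : Fin m → Evec n) (um1 : Evec n)
    (hu : DualFeasible a u0 u um1)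
    (ζ : Fin m → ℝ)
    (hufrom : ∀ i, u i = ζ i • abar a i)
    (hζE : ∀ i : Fin m, (i : ℕ) < mbar → ζ i ∈ Set.Icc (-1 : ℝ) 1)
    (hζI : ∀ i : Fin m, mbar ≤ (i : ℕ) → ζ i ∈ Set.Icc (0 : ℝ) 1)
    (hζβ : ∀ i, |ζ i| ≤ βv) :
    lpen mbar a b 0 - Dval mbar g a b Hf H0 X ρ u0 u um1
      ≥ (1 - βv) * lpen mbar a b 0  := by
  obtain ⟨hβ0, hβ1⟩ := hβv
  have hJ0 : lpen mbar a b 0 = ∑ i : Fin m, if (i:ℕ) < mbar then |b i| else max (b i) 0 := by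
    simp [lpen]
  have hQ : 0 ≤ ⟪u0 - ρ • g, matApply (Hmat Hf H0 ρ)⁻¹ (u0 - ρ • g)⟫ :=
    quad_nonneg _ ((hpos ρ hρ).inv.posSemidef) _
  have hS : 0 ≤ suppFn um1 X := suppX X hXcp hX0 um1
  have hsupp : ∀ i, ‖a i‖ * suppFn (u i) (Cset mbar a b i) = -(ζ i * b i) := by
    intro i
    rw [hufrom i, supp_eq mbar a ha b ζ i (fun h => (hζI i h).1)]
    have hne : ‖a i‖ ≠ 0 := norm_ne_zero_iff.2 (ha i)
    field_simp [bbar]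
    rw [bbar]; field_simp
  have hsum : ∑ i, ‖a i‖ * suppFn (u i) (Cset mbar a b i) = -∑ i, ζ i * b i := by
    simp only [hsupp, Finset.sum_neg_distrib]
  have hper : ∀ i : Fin m, ζ i * b i ≤ βv * (if (i:ℕ) < mbar then |b i| else max (b i) 0) := by
    intro i
    by_cases hlt : (i:ℕ) < mbar
    · simp only [if_pos hlt]
      calc ζ i * b i ≤ |ζ i * b i| := le_abs_self _
        _ = |ζ i| * |b i| := abs_mul _ _
        _ ≤ βv * |b i| := mul_le_mul_of_nonneg_right (hζβ i) (abs_nonneg _)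
    · simp only [if_neg hlt]
      have h0 : 0 ≤ ζ i := (hζI i (not_lt.mp hlt)).1
      have hζb : ζ i ≤ βv := le_trans (le_abs_self _) (hζβ i)
      rcases le_or_gt (b i) 0 with hb | hb
      · have hmx : max (b i) 0 = 0 := max_eq_right hb
        rw [hmx]; nlinarith
      · have hmx : max (b i) 0 = b i := max_eq_left hb.le
        rw [hmx]; nlinarith
  have hsumb : ∑ i, ζ i * b i ≤ βv * lpen mbar a b 0 := by
    rw [hJ0, Finset.mul_sum]
    exact Finset.sum_le_sum fun i _ => hper i
  have hD : Dval mbar g a b Hf H0 X ρ u0 u um1 ≤ βv * lpen mbar a b 0 := by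
    unfold Dval
    rw [hsum]
    linarith
  linarith [hD]
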